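/- For every odd integer k ≥ 1, the probability distribution D that takes value 1 with probability 1/2 and value −1 + 2/(k+1) with probability 1/2 satisfies the k-sample median constraint, and E[D] = 1/(k+1). In particular θ_k ≥ 1/(k+1) for odd k. -/

import Mathlib

open MeasureTheory

/-- A probability distribution `μ` on `[-1,1]` satisfies the `k`-sample median constraint if
for `k` i.i.d. samples `Y_1, …, Y_k ~ μ`, `Pr[Y_1 + ⋯ + Y_k ≤ 0] ≥ 1/2`. -/
def MedianConstraint (k : ℕ) (μ : Measure ℝ) : Prop :=
  (1 : ENNReal) / 2 ≤ Measure.pi (fun _ : Fin k => μ) {y | ∑ i, y i ≤ 0}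

/-- For every odd `k ≥ 1`, the distribution taking value `1` with probability
`1/2` and value `-1 + 2/(k+1)` with probability `1/2` satisfies the `k`-sample median
constraint and has expectation `1/(k+1)`. -/
theorem stmt5 (k : ℕ) (hk : 1 ≤ k) (hodd : Odd k)
    (μ : Measure ℝ)
    (hμ : μ = ((1 : ENNReal) / 2) • Measure.dirac (1 : ℝ)
        + ((1 : ENNReal) / 2) • Measure.dirac (-1 + 2 / ((k : ℝ) + 1))) :
    MedianConstraint k μ ∧ ∫ x, x ∂μ = 1 / ((k : ℝ) + 1) := by
  classical
  set a : ℝ := -1 + 2 / ((k : ℝ) + 1) with ha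
  set c : ℝ := 2 / ((k : ℝ) + 1) with hc
  have hK1 : (0 : ℝ) < (k : ℝ) + 1 := by positivity
  have hK1' : ((k : ℝ) + 1) ≠ 0 := ne_of_gt hK1
  -- probability measure instance
  have hprob : IsProbabilityMeasure μ := by
    constructor
    rw [hμ]
    simp [ENNReal.div_add_div_same]
    rw [ENNReal.inv_two_add_inv_two]
  haveI := hprob
  haveI : ∀ i : Fin k, SigmaFinite ((fun _ : Fin k => μ) i) := fun i => inferInstance
  constructor
  · -- median constraint
    unfold MedianConstraint
    set π := Measure.pi (fun _ : Fin k => μ) with hπ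
    haveI : IsProbabilityMeasure π := by
      constructor
      rw [hπ, Measure.pi_univ]
      simp
    set A : Set (Fin k → ℝ) := {y | ∑ i, y i ≤ 0} with hA
    set B : Set (Fin k → ℝ) := {y | (k : ℝ) * c ≤ ∑ i, y i} with hB
    set N : Set (Fin k → ℝ) := ⋃ i : Fin k, (fun y => y i) ⁻¹' ({1, a} : Set ℝ)ᶜ with hN
    have hs : MeasurableSet ({1, a} : Set ℝ) :=
      ((Set.finite_singleton a).insert 1).measurableSet
    -- μ gives mass zero outside {1, a}
    have hμs : μ (({1, a} : Set ℝ)ᶜ) = 0 := by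
      rw [hμ]
      simp [Measure.dirac_apply' _ hs.compl, Set.indicator_apply]
    have hNnull : π N = 0 := by
      refine measure_iUnion_null fun i => ?_
      exact Measure.pi_eval_preimage_null _ hμs
    -- measurability of A
    have hAm : MeasurableSet A := by
      refine measurableSet_le (Finset.measurable_sum _ fun i _ => measurable_pi_apply i)
        measurable_const
    -- the reflection x ↦ c - x preserves μ
    have hfm : Measurable (fun x : ℝ => c - x) := (measurable_const.sub measurable_id)
    have hmap : Measure.map (fun x : ℝ => c - x) μ = μ := by
      rw [hμ, Measure.map_add _ _ hfm, Measure.map_smul, Measure.map_smul,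
        Measure.map_dirac' hfm, Measure.map_dirac' hfm]
      have h1 : c - 1 = a := by rw [ha, hc]; ring
      have h2 : c - a = 1 := by rw [ha, hc]; ring
      rw [h1, h2, add_comm]
    have hf : MeasurePreserving (fun x : ℝ => c - x) μ μ := ⟨hfm, hmap⟩
    have hT : MeasurePreserving (fun (y : Fin k → ℝ) (i : Fin k) => c - y i) π π :=
      measurePreserving_pi _ _ (fun _ => hf)
    have hpre : (fun (y : Fin k → ℝ) (i : Fin k) => c - y i) ⁻¹' A = B := by
      ext y
      simp only [hA, hB, Set.mem_preimage, Set.mem_setOf_eq, Finset.sum_sub_distrib,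
        Finset.sum_const, Finset.card_univ, Fintype.card_fin, nsmul_eq_mul]
      constructor <;> intro h <;> linarith
    have hBA : π B = π A := by
      rw [← hpre]
      exact hT.measure_preimage hAm.nullMeasurableSet
    -- the key combinatorial inclusion
    have hsub : ∀ y : Fin k → ℝ, y ∈ A ∪ B ∪ N := by
      intro y
      by_cases hy : y ∈ N
      · exact Or.inr hy
      · left
        have hyi : ∀ i : Fin k, y i ∈ ({1, a} : Set ℝ) := by
          intro i
          by_contra hcon
          exact hy (Set.mem_iUnion.2 ⟨i, hcon⟩)
        set S : Finset (Fin k) := Finset.univ.filter (fun i => y i = 1) with hS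
        set m : ℕ := S.card with hm
        set m' : ℕ := (Finset.univ.filter (fun i => ¬ y i = 1)).card with hm'
        have hmm' : m + m' = k := by
          rw [hm, hm', hS, Finset.card_filter_add_card_filter_not]
          simp
        have hsum : ∑ i, y i = (m : ℝ) + (m' : ℝ) * a := by
          rw [← Finset.sum_filter_add_sum_filter_not Finset.univ (fun i => y i = 1)]
          have h1 : ∑ i ∈ Finset.univ.filter (fun i => y i = 1), y i = (m : ℝ) := by
            rw [Finset.sum_congr rfl (fun i hi => (Finset.mem_filter.1 hi).2)]
            simp [hm, hS]
          have h2 : ∑ i ∈ Finset.univ.filter (fun i => ¬ y i = 1), y i = (m' : ℝ) * a := by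
            have hall : ∀ i ∈ Finset.univ.filter (fun i => ¬ y i = 1), y i = a := by
              intro i hi
              have h := hyi i
              simp only [Set.mem_insert_iff, Set.mem_singleton_iff] at h
              rcases h with h | h
              · exact absurd h (Finset.mem_filter.1 hi).2
              · exact h
            rw [Finset.sum_congr rfl hall, Finset.sum_const, nsmul_eq_mul]
          rw [h1, h2]
        have hm'real : (m' : ℝ) = (k : ℝ) - (m : ℝ) := by
          have : ((m + m' : ℕ) : ℝ) = (k : ℝ) := by rw [hmm']
          push_cast at this
          linarith
        have key : ((k : ℝ) + 1) * ((m : ℝ) + (m' : ℝ) * a) =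
            (k : ℝ) * (2 * (m : ℝ) - (k : ℝ) + 1) := by
          rw [hm'real, ha, hc]
          field_simp
          ring
        by_cases h2m : 2 * m ≤ k
        · -- sum ≤ 0
                 left
                 have h2m' : 2 * m < k := by
                   rcases lt_or_eq_of_le h2m with h | h
                   · exact h
                   · exfalso
                     rcases hodd with ⟨t, ht⟩
                     omega
                 have h2mr : 2 * (m : ℝ) + 1 ≤ (k : ℝ) := by exact_mod_cast h2m'
                 rw [hA, Set.mem_setOf_eq, hsum]
                 nlinarith [(Nat.cast_nonneg k : (0:ℝ) ≤ (k:ℝ))]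
        · -- k*c ≤ sum
                 right
                 have h2m' : k + 1 ≤ 2 * m := by omega
                 have h2mr : (k : ℝ) + 1 ≤ 2 * (m : ℝ) := by exact_mod_cast h2m'
                 rw [hB, Set.mem_setOf_eq, hsum, hc]
                 have hkc : ((k : ℝ) + 1) * ((k : ℝ) * (2 / ((k : ℝ) + 1))) = 2 * (k : ℝ) := by
                   field_simp
                 have hkk : (0:ℝ) ≤ (k:ℝ) := Nat.cast_nonneg k
                 have hstep : ((k:ℝ)+1) * ((k:ℝ) * (2/((k:ℝ)+1))) ≤
                     ((k:ℝ)+1) * ((m:ℝ) + (m':ℝ) * a) := by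
                   rw [hkc, key]
                   nlinarith [mul_nonneg hkk (by linarith : (0:ℝ) ≤ 2*(m:ℝ) - (k:ℝ) - 1)]
                 exact (mul_le_mul_iff_right₀ hK1).1 hstep
    -- put everything together
    have hchain : (1 : ENNReal) ≤ π A + π A := by
      calc (1 : ENNReal) = π Set.univ := (measure_univ).symm
        _ ≤ π (A ∪ B ∪ N) := measure_mono (fun y _ => hsub y)
        _ ≤ π (A ∪ B) + π N := measure_union_le _ _
        _ = π (A ∪ B) := by rw [hNnull, add_zero]
        _ ≤ π A + π B := measure_union_le _ _
        _ = π A + π A := by rw [hBA]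
    rw [ENNReal.div_le_iff_le_mul (Or.inl (by norm_num)) (Or.inl (by norm_num))]
    calc (1 : ENNReal) ≤ π A + π A := hchain
      _ = π A * 2 := by rw [mul_two]
  · -- expectation
    have hint : ∀ x : ℝ, Integrable (fun t : ℝ => t)
        (((1 : ENNReal) / 2) • Measure.dirac x) := by
      intro x
      refine Integrable.smul_measure ?_ (by norm_num)
      refine (integrable_const x).congr ?_
      rw [Filter.EventuallyEq, ae_dirac_eq]
      simp
    rw [hμ, integral_add_measure (hint 1) (hint a), integral_smul_measure,
      integral_smul_measure, integral_dirac, integral_dirac]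
    have htr : ((1 : ENNReal) / 2).toReal = (1 : ℝ) / 2 := by
      simp
    rw [htr, ha, hc]
    field_simp [hK1']
    ring_nf
    have h1k : (1 + (k:ℝ)) ≠ 0 := by positivity
    field_simp
    ring
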